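/- Let (X, σ) be a shift space with the strong specification property and let Y ⊂ X be a compact shift-invariant proper subset. Then h_top(Y) < h_top(X). More precisely, there exist constants C ≥ 1 (independent of α) and for any sufficiently small α > 0 the estimate h_top(X) ≥ h_top(Y) + (α/n)(−log α − log C) holds, where n is a fixed window size; choosing α small makes the second term positive. -/

import Mathlib

open Filter

/-- The left shift on one-sided sequences. -/
def shiftMap {A : Type*} (x : ℕ → A) : ℕ → A := fun n => x (n + 1)

/-- The language of `X`. -/
def langL {A : Type*} (X : Set (ℕ → A)) : Set (List A) :=
  {w | ∃ x ∈ X, ∀ i : Fin w.length, x i.val = w.get i}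

/-- The number of length-`n` words in the language of `X`. -/
noncomputable def wcount {A : Type*} (X : Set (ℕ → A)) (n : ℕ) : ℕ :=
  {w ∈ langL X | w.length = n}.ncard

section Lang

variable {A : Type*} {X Y : Set (ℕ → A)}

lemma mem_langL_iff {w : List A} :
    w ∈ langL X ↔ ∃ x ∈ X, ∀ i : ℕ, ∀ h : i < w.length, x i = w[i] := by
  constructor
  · rintro ⟨x, hx, h⟩
    exact ⟨x, hx, fun i hi => by simpa [List.get_eq_getElem] using h ⟨i, hi⟩⟩
  · rintro ⟨x, hx, h⟩
    exact ⟨x, hx, fun i => by simpa [List.get_eq_getElem] using h i i.2⟩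

lemma shift_iter_apply (x : ℕ → A) (a n : ℕ) : (shiftMap^[a] x) n = x (n + a) := by
  induction a generalizing x n with
  | zero => rfl
  | succ a ih =>
    rw [Function.iterate_succ_apply, ih]
    show x (n + a + 1) = x (n + (a + 1))
    congr 1

lemma shift_iter_mem (hinv : shiftMap '' Y = Y) {y : ℕ → A} (hy : y ∈ Y) (a : ℕ) :
    shiftMap^[a] y ∈ Y := by
  induction a with
  | zero => simpa
  | succ a ih =>
    rw [Function.iterate_succ_apply']
    rw [← hinv]
    exact ⟨_, ih, rfl⟩

lemma langL_mono (h : Y ⊆ X) : langL Y ⊆ langL X := by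
  rintro w ⟨x, hx, hw⟩
  exact ⟨x, h hx, hw⟩

lemma nil_mem_langL (h : X.Nonempty) : ([] : List A) ∈ langL X := by
  obtain ⟨x, hx⟩ := h
  exact ⟨x, hx, fun i => i.elim0⟩

lemma ofFn_prefix_mem_langL {x : ℕ → A} (hx : x ∈ X) (n : ℕ) :
    (List.ofFn (fun i : Fin n => x i.val)) ∈ langL X := by
  rw [mem_langL_iff]
  refine ⟨x, hx, fun i hi => ?_⟩
  rw [List.getElem_ofFn]

lemma exists_word_langL (h : Y.Nonempty) (n : ℕ) :
    ∃ w ∈ langL Y, w.length = n := by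
  obtain ⟨y, hy⟩ := h
  exact ⟨_, ofFn_prefix_mem_langL hy n, by simp⟩

lemma take_mem_langL {w : List A} (hw : w ∈ langL Y) (a : ℕ) : w.take a ∈ langL Y := by
  rw [mem_langL_iff] at hw ⊢
  obtain ⟨y, hy, h⟩ := hw
  refine ⟨y, hy, fun i hi => ?_⟩
  have hi' : i < w.length := lt_of_lt_of_le hi (by simp)
  rw [List.getElem_take]
  exact h i hi'

lemma drop_mem_langL (hinv : shiftMap '' Y = Y) {w : List A} (hw : w ∈ langL Y) (a : ℕ) :
    w.drop a ∈ langL Y := by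
  rw [mem_langL_iff] at hw ⊢
  obtain ⟨y, hy, h⟩ := hw
  refine ⟨shiftMap^[a] y, shift_iter_mem hinv hy a, fun i hi => ?_⟩
  have hi' : a + i < w.length := by
    simp only [List.length_drop] at hi; omega
  rw [List.getElem_drop, shift_iter_apply]
  simpa [Nat.add_comm] using h _ hi'

lemma infix_mem_langL (hinv : shiftMap '' Y = Y) {w : List A} (hw : w ∈ langL Y) (a b : ℕ) :
    (w.drop a).take b ∈ langL Y :=
  take_mem_langL (drop_mem_langL hinv hw a) b

end Lang

section Count

variable {A : Type*} [Fintype A] {Z : Set (ℕ → A)}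

lemma ncard_prod {α β : Type*} (s : Set α) (t : Set β) :
    (s ×ˢ t).ncard = s.ncard * t.ncard := by
  rw [← Nat.card_coe_set_eq, ← Nat.card_coe_set_eq, ← Nat.card_coe_set_eq]
  rw [Nat.card_congr (Equiv.Set.prod s t), Nat.card_prod]

lemma wordset_finite (Z : Set (ℕ → A)) (n : ℕ) :
    {w ∈ langL Z | w.length = n}.Finite :=
  Set.Finite.subset (List.finite_length_eq A n) (fun w hw => hw.2)

lemma wcount_pos (h : Z.Nonempty) (n : ℕ) : 1 ≤ wcount Z n := by
  obtain ⟨w, hw, hl⟩ := exists_word_langL h n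
  have hne : ({w ∈ langL Z | w.length = n}).Nonempty := ⟨w, hw, hl⟩
  have := (Set.ncard_pos (wordset_finite Z n)).mpr hne
  rw [wcount]
  omega

lemma wcount_zero_le : wcount Z 0 ≤ 1 := by
  have : {w ∈ langL Z | w.length = 0} ⊆ {([] : List A)} := by
    rintro w ⟨-, hl⟩
    simp [List.length_eq_zero_iff] at hl
    simp [hl]
  calc wcount Z 0 ≤ ({([] : List A)} : Set (List A)).ncard :=
        Set.ncard_le_ncard this (Set.finite_singleton _)
    _ = 1 := Set.ncard_singleton _

lemma wcount_submul (hinv : shiftMap '' Z = Z) (a b : ℕ) :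
    wcount Z (a + b) ≤ wcount Z a * wcount Z b := by
  rw [wcount, wcount, wcount, ← ncard_prod]
  refine Set.ncard_le_ncard_of_injOn (fun w => (w.take a, w.drop a)) ?_ ?_ ?_
  · rintro w ⟨hw, hl⟩
    refine ⟨⟨take_mem_langL hw a, ?_⟩, ⟨drop_mem_langL hinv hw a, ?_⟩⟩
    · simp [hl]
    · simp [hl]
  · rintro w₁ - w₂ - h
    simp only [Prod.mk.injEq] at h
    rw [← List.take_append_drop a w₁, h.1, h.2, List.take_append_drop]
  · exact Set.Finite.prod (wordset_finite Z a) (wordset_finite Z b)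

lemma wcount_pow (hinv : shiftMap '' Z = Z) (hne : Z.Nonempty) (ℓ m : ℕ) :
    wcount Z (m * ℓ) ≤ (wcount Z ℓ) ^ m := by
  induction m with
  | zero => simpa using wcount_zero_le
  | succ m ih =>
    have : (m + 1) * ℓ = ℓ + m * ℓ := by ring
    rw [this, pow_succ]
    calc wcount Z (ℓ + m * ℓ) ≤ wcount Z ℓ * wcount Z (m * ℓ) := wcount_submul hinv ℓ (m * ℓ)
      _ ≤ wcount Z ℓ * (wcount Z ℓ) ^ m := Nat.mul_le_mul_left _ ih
      _ = (wcount Z ℓ) ^ m * wcount Z ℓ := by ring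

end Count

section Encode

variable {A : Type*}

/-- One surgery item appended to `W`. -/
def st4 (r : ℕ) (w0 : List A) (glue : List A → List A → List A)
    (W V : List A) (p : ℕ) : List A :=
  let W1 := W ++ glue W w0 ++ w0
  let W2 := W1 ++ glue W1 (V.take (p * r)) ++ V.take (p * r)
  let W3 := W2 ++ glue W2 w0 ++ w0
  W3 ++ glue W3 (V.drop (p * r)) ++ V.drop (p * r)

def encode (r : ℕ) (w0 : List A) (glue : List A → List A → List A) :
    List A → List (List A × ℕ) → List A
  | W, [] => W
  | W, (V, p) :: rest => encode r w0 glue (st4 r w0 glue W V p) rest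

variable {X Y : Set (ℕ → A)} {τ t q r : ℕ} {w0 : List A}
  {glue : List A → List A → List A}

section Spec

variable
  (Hglue : ∀ v ∈ langL X, ∀ w ∈ langL X,
    (glue v w).length = τ ∧ v ++ glue v w ++ w ∈ langL X)
  (Hw0X : w0 ∈ langL X) (Hw0len : w0.length = t) (hr : r = t + 2 * τ)
  (hYX : langL Y ⊆ langL X) (hYinv : shiftMap '' Y = Y)

include Hglue Hw0X hYX hYinv in
lemma st4_spec {W V : List A} (hW : W ∈ langL X) (hV : V ∈ langL Y) (p : ℕ) :
    st4 r w0 glue W V p ∈ langL X ∧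
    ∃ u1 u2 u3 u4 : List A,
      u1.length = τ ∧ u2.length = τ ∧ u3.length = τ ∧ u4.length = τ ∧
      st4 r w0 glue W V p =
        W ++ (u1 ++ (w0 ++ (u2 ++ (V.take (p * r) ++
          (u3 ++ (w0 ++ (u4 ++ V.drop (p * r)))))))) := by
  have hA : V.take (p * r) ∈ langL X := hYX (take_mem_langL hV _)
  have hB : V.drop (p * r) ∈ langL X := hYX (drop_mem_langL hYinv hV _)
  obtain ⟨hg1, hW1⟩ := Hglue W hW w0 Hw0X
  obtain ⟨hg2, hW2⟩ := Hglue _ hW1 _ hA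
  obtain ⟨hg3, hW3⟩ := Hglue _ hW2 w0 Hw0X
  obtain ⟨hg4, hW4⟩ := Hglue _ hW3 _ hB
  refine ⟨hW4, _, _, _, _, hg1, hg2, hg3, hg4, ?_⟩
  simp only [st4, List.append_assoc]

include Hglue Hw0X Hw0len hr hYX hYinv in
lemma st4_len {W V : List A} (hW : W ∈ langL X) (hV : V ∈ langL Y)
    (hVl : V.length = (q - 1) * r) {p : ℕ} (hp : p < q) :
    (st4 r w0 glue W V p).length = W.length + (q + 1) * r := by
  obtain ⟨-, u1, u2, u3, u4, h1, h2, h3, h4, heq⟩ :=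
    st4_spec Hglue Hw0X hYX hYinv hW hV p
  have hpr : p * r ≤ (q - 1) * r := Nat.mul_le_mul_right _ (by omega)
  have h5 : (V.take (p * r)).length = p * r := by
    simp [List.length_take]; omega
  have h6 : (V.drop (p * r)).length = (q - 1) * r - p * r := by
    simp [List.length_drop, hVl]
  have hq1 : (q + 1) * r = (q - 1) * r + 2 * r := by
    have : q + 1 = (q - 1) + 2 := by omega
    rw [this, Nat.add_mul]
  rw [heq]
  simp only [List.length_append, h1, h2, h3, h4, h5, h6, Hw0len]
  omega

include Hglue Hw0X Hw0len hr hYX hYinv in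
lemma encode_spec : ∀ (l : List (List A × ℕ)) {W : List A}, W ∈ langL X →
    (∀ x ∈ l, x.1 ∈ langL Y ∧ x.1.length = (q - 1) * r ∧ x.2 < q) →
    encode r w0 glue W l ∈ langL X ∧
    (encode r w0 glue W l).length = W.length + l.length * ((q + 1) * r) ∧
    W <+: encode r w0 glue W l := by
  intro l
  induction l with
  | nil => intro W hW _; exact ⟨hW, by simp [encode], List.prefix_refl W⟩
  | cons x rest ih =>
    intro W hW hdom
    obtain ⟨V, p⟩ := x
    obtain ⟨hV, hVl, hp⟩ := hdom (V, p) (by simp)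
    have hrest : ∀ x ∈ rest, x.1 ∈ langL Y ∧ x.1.length = (q - 1) * r ∧ x.2 < q :=
      fun x hx => hdom x (by simp [hx])
    have hst : st4 r w0 glue W V p ∈ langL X :=
      (st4_spec (r := r) Hglue Hw0X hYX hYinv hW hV p).1
    obtain ⟨hmem, hlen, hpre⟩ := ih hst hrest
    refine ⟨hmem, ?_, ?_⟩
    · show (encode r w0 glue (st4 r w0 glue W V p) rest).length = _
      rw [hlen, st4_len Hglue Hw0X Hw0len hr hYX hYinv hW hV hVl hp]
      simp [List.length_cons]
      ring
    · show W <+: encode r w0 glue (st4 r w0 glue W V p) rest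
      refine List.IsPrefix.trans ?_ hpre
      obtain ⟨-, u1, u2, u3, u4, -, -, -, -, heq⟩ :=
        st4_spec (r := r) Hglue Hw0X hYX hYinv hW hV p
      rw [heq]
      exact List.prefix_append _ _
end Spec

end Encode

section Inj

variable {A : Type*} {Y : Set (ℕ → A)} {τ t q r : ℕ} {w0 : List A}

lemma window_filler {u1 u2 u3 u4 Aw B : List A} {p : ℕ}
    (h1 : u1.length = τ) (h2 : u2.length = τ) (h3 : u3.length = τ)
    (hw : w0.length = t) (hr : r = t + 2 * τ) (hA : Aw.length = p * r) :
    (((u1 ++ (w0 ++ (u2 ++ (Aw ++ (u3 ++ (w0 ++ (u4 ++ B)))))))).drop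
      ((p + 1) * r + τ)).take t = w0 := by
  have hre : u1 ++ (w0 ++ (u2 ++ (Aw ++ (u3 ++ (w0 ++ (u4 ++ B)))))) =
      (u1 ++ (w0 ++ (u2 ++ Aw))) ++ (u3 ++ (w0 ++ (u4 ++ B))) := by
    simp [List.append_assoc]
  have hP : (p + 1) * r + τ =
      (u1 ++ (w0 ++ (u2 ++ Aw))).length + u3.length := by
    simp [List.length_append, h1, h2, h3, hw, hA, hr]
    ring
  rw [hre, hP, List.drop_length_add_append, List.drop_left, List.take_left' hw]

lemma window_low {u1 u2 Aw rest : List A} {p p' : ℕ}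
    (h1 : u1.length = τ) (h2 : u2.length = τ)
    (hw : w0.length = t) (hr : r = t + 2 * τ) (hA : Aw.length = p * r)
    (hp : p' + 1 ≤ p) :
    (((u1 ++ (w0 ++ (u2 ++ (Aw ++ rest))))).drop ((p' + 1) * r + τ)).take t =
      (Aw.drop (p' * r + τ)).take t := by
  have hre : u1 ++ (w0 ++ (u2 ++ (Aw ++ rest))) =
      (u1 ++ (w0 ++ u2)) ++ (Aw ++ rest) := by
    simp [List.append_assoc]
  have hR : (u1 ++ (w0 ++ u2)).length = r := by
    simp [List.length_append, h1, h2, hw, hr]; ring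
  have hk : (p' + 1) * r + τ = (u1 ++ (w0 ++ u2)).length + (p' * r + τ) := by
    rw [hR]; ring
  rw [hre, hk, List.drop_length_add_append, List.drop_append]
  apply List.take_append_of_le_length
  have : τ + t ≤ r := by omega
  have hlen : (Aw.drop (p' * r + τ)).length = p * r - (p' * r + τ) := by
    simp [List.length_drop, hA]
  rw [hlen]
  have : (p' + 1) * r ≤ p * r := Nat.mul_le_mul_right _ hp
  have : p' * r + r ≤ p * r := by rw [← Nat.succ_mul]; exact this
  omega

lemma item_ne {V₁ V₂ u11 u12 u13 u14 u21 u22 u23 u24 : List A} {p₁ p₂ : ℕ}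
    (hYinv : shiftMap '' Y = Y) (Hw0Y : w0 ∉ langL Y) (Hw0len : w0.length = t)
    (hr : r = t + 2 * τ)
    (hV₂ : V₂ ∈ langL Y) (hl₂ : V₂.length = (q - 1) * r) (hp₂ : p₂ < q)
    (h11 : u11.length = τ) (h12 : u12.length = τ) (h13 : u13.length = τ)
    (h21 : u21.length = τ) (h22 : u22.length = τ)
    (hl₁' : (V₁.take (p₁ * r)).length = p₁ * r)
    (hlt : p₁ < p₂) :
    u11 ++ (w0 ++ (u12 ++ (V₁.take (p₁ * r) ++ (u13 ++ (w0 ++ (u14 ++ V₁.drop (p₁ * r))))))) ≠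
    u21 ++ (w0 ++ (u22 ++ (V₂.take (p₂ * r) ++ (u23 ++ (w0 ++ (u24 ++ V₂.drop (p₂ * r))))))) := by
  intro heq
  have hA₂ : (V₂.take (p₂ * r)).length = p₂ * r := by
    have : p₂ * r ≤ (q - 1) * r := Nat.mul_le_mul_right _ (by omega)
    simp [List.length_take, hl₂]; omega
  have hL : (((u11 ++ (w0 ++ (u12 ++ (V₁.take (p₁ * r) ++
      (u13 ++ (w0 ++ (u14 ++ V₁.drop (p₁ * r)))))))) ).drop
      ((p₁ + 1) * r + τ)).take t = w0 :=
    window_filler h11 h12 h13 Hw0len hr hl₁'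
  have hRw : (((u21 ++ (w0 ++ (u22 ++ (V₂.take (p₂ * r) ++
      (u23 ++ (w0 ++ (u24 ++ V₂.drop (p₂ * r)))))))) ).drop
      ((p₁ + 1) * r + τ)).take t = ((V₂.take (p₂ * r)).drop (p₁ * r + τ)).take t :=
    window_low h21 h22 Hw0len hr hA₂ hlt
  rw [heq, hRw] at hL
  apply Hw0Y
  rw [← hL]
  exact infix_mem_langL hYinv (take_mem_langL hV₂ _) _ _

lemma item_inj {V₁ V₂ u11 u12 u13 u14 u21 u22 u23 u24 : List A} {p₁ p₂ : ℕ}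
    (hYinv : shiftMap '' Y = Y) (Hw0Y : w0 ∉ langL Y) (Hw0len : w0.length = t)
    (hr : r = t + 2 * τ)
    (hV₁ : V₁ ∈ langL Y) (hl₁ : V₁.length = (q - 1) * r) (hp₁ : p₁ < q)
    (hV₂ : V₂ ∈ langL Y) (hl₂ : V₂.length = (q - 1) * r) (hp₂ : p₂ < q)
    (h11 : u11.length = τ) (h12 : u12.length = τ) (h13 : u13.length = τ) (h14 : u14.length = τ)
    (h21 : u21.length = τ) (h22 : u22.length = τ) (h23 : u23.length = τ) (h24 : u24.length = τ)
    (heq : u11 ++ (w0 ++ (u12 ++ (V₁.take (p₁ * r) ++ (u13 ++ (w0 ++ (u14 ++ V₁.drop (p₁ * r))))))) =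
      u21 ++ (w0 ++ (u22 ++ (V₂.take (p₂ * r) ++ (u23 ++ (w0 ++ (u24 ++ V₂.drop (p₂ * r)))))))) :
    V₁ = V₂ ∧ p₁ = p₂ := by
  have hA₁ : (V₁.take (p₁ * r)).length = p₁ * r := by
    have : p₁ * r ≤ (q - 1) * r := Nat.mul_le_mul_right _ (by omega)
    simp [List.length_take, hl₁]; omega
  have hA₂ : (V₂.take (p₂ * r)).length = p₂ * r := by
    have : p₂ * r ≤ (q - 1) * r := Nat.mul_le_mul_right _ (by omega)
    simp [List.length_take, hl₂]; omega
  have hpp : p₁ = p₂ := by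
    rcases lt_trichotomy p₁ p₂ with h | h | h
    · exact absurd heq (item_ne hYinv Hw0Y Hw0len hr hV₂ hl₂ hp₂ h11 h12 h13 h21 h22 hA₁ h)
    · exact h
    · exact absurd heq.symm
        (item_ne hYinv Hw0Y Hw0len hr hV₁ hl₁ hp₁ h21 h22 h23 h11 h12 hA₂ h)
  subst hpp
  refine ⟨?_, rfl⟩
  obtain ⟨-, heq⟩ := List.append_inj heq (by omega)
  obtain ⟨-, heq⟩ := List.append_inj heq rfl
  obtain ⟨-, heq⟩ := List.append_inj heq (by omega)
  obtain ⟨hA, heq⟩ := List.append_inj heq (by omega)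
  obtain ⟨-, heq⟩ := List.append_inj heq (by omega)
  obtain ⟨-, heq⟩ := List.append_inj heq rfl
  obtain ⟨-, hB⟩ := List.append_inj heq (by omega)
  rw [← List.take_append_drop (p₁ * r) V₁, hA, hB, List.take_append_drop]

end Inj

section Encode2

variable {A : Type*} {X Y : Set (ℕ → A)} {τ t q r : ℕ} {w0 : List A}
  {glue : List A → List A → List A}

variable
  (Hglue : ∀ v ∈ langL X, ∀ w ∈ langL X,
    (glue v w).length = τ ∧ v ++ glue v w ++ w ∈ langL X)
  (Hw0X : w0 ∈ langL X) (Hw0len : w0.length = t) (hr : r = t + 2 * τ)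
  (hYX : langL Y ⊆ langL X) (hYinv : shiftMap '' Y = Y) (Hw0Y : w0 ∉ langL Y)

include Hglue Hw0X Hw0len hr hYX hYinv Hw0Y in
lemma encode_inj : ∀ (l₁ : List (List A × ℕ)), ∀ {l₂ : List (List A × ℕ)} {W : List A},
    W ∈ langL X →
    (∀ x ∈ l₁, x.1 ∈ langL Y ∧ x.1.length = (q - 1) * r ∧ x.2 < q) →
    (∀ x ∈ l₂, x.1 ∈ langL Y ∧ x.1.length = (q - 1) * r ∧ x.2 < q) →
    l₁.length = l₂.length →
    encode r w0 glue W l₁ = encode r w0 glue W l₂ → l₁ = l₂ := by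
  intro l₁
  induction l₁ with
  | nil =>
    intro l₂ W _ _ _ hlen _
    cases l₂ with
    | nil => rfl
    | cons y r₂ => simp at hlen
  | cons x r₁ ih =>
    intro l₂ W hW hd₁ hd₂ hlen henc
    cases l₂ with
    | nil => simp at hlen
    | cons y r₂ =>
      obtain ⟨V₁, p₁⟩ := x
      obtain ⟨V₂, p₂⟩ := y
      obtain ⟨hV₁, hl₁, hp₁⟩ := hd₁ (V₁, p₁) (by simp)
      obtain ⟨hV₂, hl₂, hp₂⟩ := hd₂ (V₂, p₂) (by simp)
      have hr₁ : ∀ x ∈ r₁, x.1 ∈ langL Y ∧ x.1.length = (q - 1) * r ∧ x.2 < q :=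
        fun x hx => hd₁ x (by simp [hx])
      have hr₂ : ∀ x ∈ r₂, x.1 ∈ langL Y ∧ x.1.length = (q - 1) * r ∧ x.2 < q :=
        fun x hx => hd₂ x (by simp [hx])
      obtain ⟨hm₁, u11, u12, u13, u14, g11, g12, g13, g14, hdec₁⟩ :=
        st4_spec (r := r) Hglue Hw0X hYX hYinv hW hV₁ p₁
      obtain ⟨hm₂, u21, u22, u23, u24, g21, g22, g23, g24, hdec₂⟩ :=
        st4_spec (r := r) Hglue Hw0X hYX hYinv hW hV₂ p₂
      have henc' : encode r w0 glue (st4 r w0 glue W V₁ p₁) r₁ =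
          encode r w0 glue (st4 r w0 glue W V₂ p₂) r₂ := henc
      have hpre₁ := (encode_spec (q := q) Hglue Hw0X Hw0len hr hYX hYinv r₁ hm₁ hr₁).2.2
      have hpre₂ := (encode_spec (q := q) Hglue Hw0X Hw0len hr hYX hYinv r₂ hm₂ hr₂).2.2
      rw [← henc'] at hpre₂
      have hlen₁ := st4_len (q := q) Hglue Hw0X Hw0len hr hYX hYinv hW hV₁ hl₁ hp₁
      have hlen₂ := st4_len (q := q) Hglue Hw0X Hw0len hr hYX hYinv hW hV₂ hl₂ hp₂
      have hs : st4 r w0 glue W V₁ p₁ = st4 r w0 glue W V₂ p₂ := by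
        rw [List.prefix_iff_eq_take] at hpre₁ hpre₂
        rw [hpre₁, hpre₂, hlen₁, hlen₂]
      have hitem := hs
      rw [hdec₁, hdec₂] at hitem
      have hitem' := List.append_cancel_left hitem
      have hVp := item_inj (q := q) hYinv Hw0Y Hw0len hr hV₁ hl₁ hp₁ hV₂ hl₂ hp₂
        g11 g12 g13 g14 g21 g22 g23 g24 hitem'
      obtain ⟨hVe, hpe⟩ := hVp
      have hVe' : V₁ = V₂ := hVe
      have hpe' : p₁ = p₂ := hpe
      subst hVe'
      subst hpe'
      have hre : r₁ = r₂ :=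
        ih (W := st4 r w0 glue W V₁ p₁) hm₁ hr₁ hr₂ (by simpa using hlen) henc'
      rw [hre]

end Encode2

section Counting

variable {A : Type*} [Fintype A] {X Y : Set (ℕ → A)} {τ t q r : ℕ} {w0 : List A}
  {glue : List A → List A → List A}

/-- The parameter set for one item. -/
def Spair (Y : Set (ℕ → A)) (q r : ℕ) : Set (List A × ℕ) :=
  {v : List A | v ∈ langL Y ∧ v.length = (q - 1) * r} ×ˢ Set.Iio q

lemma ncard_Spair : (Spair Y q r).ncard = wcount Y ((q - 1) * r) * q := by
  rw [Spair, ncard_prod, wcount]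
  congr 1
  rw [← Finset.coe_Iio, Set.ncard_coe_finset, Nat.card_Iio]

def DomS (Y : Set (ℕ → A)) (q r s : ℕ) : Set (List (List A × ℕ)) :=
  {l | l.length = s ∧ ∀ x ∈ l, x ∈ Spair Y q r}

lemma ncard_DomS (s : ℕ) : (DomS Y q r s).ncard = (Spair Y q r).ncard ^ s := by
  induction s with
  | zero =>
    have h0 : DomS Y q r 0 = {([] : List (List A × ℕ))} := by
      ext l
      simp only [DomS, Set.mem_singleton_iff, Set.mem_setOf_eq]
      constructor
      · rintro ⟨hlen, -⟩
        exact List.length_eq_zero_iff.mp hlen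
      · rintro rfl
        simp
    rw [h0, Set.ncard_singleton, pow_zero]
  | succ s ih =>
    have hinj : Set.InjOn (fun z : (List A × ℕ) × List (List A × ℕ) => z.1 :: z.2)
        (Spair Y q r ×ˢ DomS Y q r s) := by
      rintro ⟨a, b⟩ - ⟨c, d⟩ - h
      simp only [List.cons.injEq] at h
      simp [h.1, h.2]
    have himg : DomS Y q r (s + 1) =
        (fun z : (List A × ℕ) × List (List A × ℕ) => z.1 :: z.2) ''
          (Spair Y q r ×ˢ DomS Y q r s) := by
      ext l
      constructor
      · rintro ⟨hlen, hall⟩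
        cases l with
        | nil => simp at hlen
        | cons x rest =>
          refine ⟨(x, rest), ⟨hall x (by simp), ⟨?_, ?_⟩⟩, rfl⟩
          · simpa using hlen
          · exact fun z hz => hall z (by simp [hz])
      · rintro ⟨⟨x, rest⟩, ⟨hx, hlen, hall⟩, rfl⟩
        refine ⟨by simp [hlen], ?_⟩
        rintro z hz
        rcases List.mem_cons.mp hz with h | h
        · rw [h]; exact hx
        · exact hall z h
    rw [himg, Set.ncard_image_of_injOn hinj, ncard_prod, ih, pow_succ]
    ring

variable
  (Hglue : ∀ v ∈ langL X, ∀ w ∈ langL X,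
    (glue v w).length = τ ∧ v ++ glue v w ++ w ∈ langL X)
  (Hw0X : w0 ∈ langL X) (Hw0len : w0.length = t) (hr : r = t + 2 * τ)
  (hYX : langL Y ⊆ langL X) (hYinv : shiftMap '' Y = Y) (Hw0Y : w0 ∉ langL Y)
  (hXne : X.Nonempty)

include Hglue Hw0X Hw0len hr hYX hYinv Hw0Y hXne in
lemma count_lower (s : ℕ) :
    (wcount Y ((q - 1) * r) * q) ^ s ≤ wcount X (s * ((q + 1) * r)) := by
  rw [← ncard_Spair (q := q) (r := r), ← ncard_DomS (Y := Y) s, wcount]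
  have hdom : ∀ l ∈ DomS Y q r s,
      ∀ x ∈ l, x.1 ∈ langL Y ∧ x.1.length = (q - 1) * r ∧ x.2 < q := by
    rintro l ⟨-, hall⟩ x hx
    obtain ⟨⟨h1, h2⟩, h3⟩ := hall x hx
    exact ⟨h1, h2, h3⟩
  refine Set.ncard_le_ncard_of_injOn (fun l => encode r w0 glue [] l) ?_ ?_
    (wordset_finite X _)
  · intro l hl
    obtain ⟨hmem, hle, -⟩ := encode_spec (q := q) Hglue Hw0X Hw0len hr hYX hYinv l
      (nil_mem_langL hXne) (hdom l hl)
    exact ⟨hmem, by rw [hle, hl.1]; simp⟩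
  · intro l₁ h₁ l₂ h₂ he
    exact encode_inj (q := q) Hglue Hw0X Hw0len hr hYX hYinv Hw0Y l₁
      (nil_mem_langL hXne) (hdom l₁ h₁) (hdom l₂ h₂) (by rw [h₁.1, h₂.1]) he

end Counting

section Analytic

variable {A : Type*} [Fintype A] {X Y : Set (ℕ → A)}

open Filter

lemma log_wcount_lower (hYinv : shiftMap '' Y = Y) (hYne : Y.Nonempty) {hY : ℝ}
    (hhY : Tendsto (fun n : ℕ => Real.log (wcount Y n) / n) atTop (nhds hY))
    (ℓ : ℕ) (hℓ : 1 ≤ ℓ) :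
    hY * ℓ ≤ Real.log (wcount Y ℓ) := by
  have hc : (1:ℝ) ≤ (wcount Y ℓ : ℝ) := by exact_mod_cast wcount_pos hYne ℓ
  have hsub : Tendsto (fun m : ℕ => m * ℓ) atTop atTop := by
    apply Filter.tendsto_atTop_atTop.mpr
    intro b
    exact ⟨b, fun a ha => le_trans ha (Nat.le_mul_of_pos_right a (by omega))⟩
  have hcomp : Tendsto (fun m : ℕ => Real.log (wcount Y (m * ℓ)) / ((m * ℓ : ℕ) : ℝ))
      atTop (nhds hY) := hhY.comp hsub
  have hbound : ∀ᶠ m : ℕ in atTop,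
      Real.log (wcount Y (m * ℓ)) / ((m * ℓ : ℕ) : ℝ) ≤ Real.log (wcount Y ℓ) / ℓ := by
    filter_upwards [Filter.eventually_ge_atTop 1] with m hm
    have h1 : wcount Y (m * ℓ) ≤ (wcount Y ℓ) ^ m := wcount_pow hYinv hYne ℓ m
    have hposm : (0:ℝ) < (m : ℝ) := by exact_mod_cast hm
    have hposℓ : (0:ℝ) < (ℓ : ℝ) := by exact_mod_cast hℓ
    have h2 : Real.log (wcount Y (m * ℓ)) ≤ m * Real.log (wcount Y ℓ) := by
      have hcast : ((wcount Y (m * ℓ) : ℕ) : ℝ) ≤ ((wcount Y ℓ : ℕ) : ℝ) ^ m := by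
        rw [← Nat.cast_pow]; exact_mod_cast h1
      have hpos0 : (0:ℝ) < ((wcount Y (m * ℓ) : ℕ) : ℝ) := by
        have := wcount_pos hYne (m * ℓ); exact_mod_cast this
      calc Real.log (wcount Y (m * ℓ)) ≤ Real.log (((wcount Y ℓ : ℕ) : ℝ) ^ m) :=
            Real.log_le_log hpos0 hcast
        _ = m * Real.log (wcount Y ℓ) := by rw [Real.log_pow]
    have h3 : ((m * ℓ : ℕ) : ℝ) = (m : ℝ) * (ℓ : ℝ) := by push_cast; ring
    rw [h3, div_le_div_iff₀ (by positivity) hposℓ]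
    calc Real.log (wcount Y (m * ℓ)) * ℓ ≤ (m * Real.log (wcount Y ℓ)) * ℓ := by
          apply mul_le_mul_of_nonneg_right h2 (le_of_lt hposℓ)
      _ = Real.log (wcount Y ℓ) * (m * ℓ) := by ring
  have hfin : hY ≤ Real.log (wcount Y ℓ) / ℓ := le_of_tendsto hcomp hbound
  have hposℓ : (0:ℝ) < (ℓ : ℝ) := by exact_mod_cast hℓ
  calc hY * ℓ ≤ (Real.log (wcount Y ℓ) / ℓ) * ℓ :=
        mul_le_mul_of_nonneg_right hfin (le_of_lt hposℓ)
    _ = Real.log (wcount Y ℓ) := by field_simp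

lemma exists_excluded_word {A : Type*} [TopologicalSpace A] [DiscreteTopology A]
    {X Y : Set (ℕ → A)} (hYX : Y ⊆ X) (hYcl : IsClosed Y) (hproper : Y ≠ X) :
    ∃ w0 : List A, w0 ∈ langL X ∧ w0 ∉ langL Y := by
  obtain ⟨x, hxX, hxY⟩ := Set.exists_of_ssubset (ssubset_of_subset_of_ne hYX hproper)
  have hopen : Yᶜ ∈ nhds x := hYcl.isOpen_compl.mem_nhds hxY
  rw [nhds_pi, Filter.mem_pi] at hopen
  obtain ⟨I, hIfin, f, hf, hsub⟩ := hopen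
  have hxi : ∀ i, x i ∈ f i := by
    intro i
    have := hf i
    rw [nhds_discrete] at this
    exact this
  obtain ⟨T, hT⟩ := hIfin.bddAbove
  refine ⟨List.ofFn (fun i : Fin (T + 1) => x i.val), ofFn_prefix_mem_langL hxX _, ?_⟩
  rintro ⟨y, hyY, hy⟩
  have hyI : y ∈ I.pi f := by
    intro i hi
    have hiT : i ≤ T := hT hi
    have hilen : i < (List.ofFn (fun j : Fin (T + 1) => x j.val)).length := by
      simp; omega
    have h1 := hy ⟨i, hilen⟩
    rw [h1, List.get_eq_getElem, List.getElem_ofFn]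
    exact hxi i
  exact hsub hyI hyY

end Analytic


/-- Entropy production: if `X` is a shift space with strong specification
and `Y ⊊ X` is a nonempty compact shift-invariant proper subset, then
`h_top(Y) < h_top(X)`; more precisely there are `C ≥ 1` and a window size
`n` so that for all sufficiently small `α > 0`,
`h_top(X) ≥ h_top(Y) + (α/n)(−log α − log C)`. -/
theorem stmt_15 {A : Type*} [Fintype A] [TopologicalSpace A] [DiscreteTopology A]
    (X Y : Set (ℕ → A)) (hXne : X.Nonempty) (hXcl : IsClosed X)
    (hXinv : shiftMap '' X = X)
    (hYX : Y ⊆ X) (hYne : Y.Nonempty) (hYcl : IsClosed Y)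
    (hYinv : shiftMap '' Y = Y) (hproper : Y ≠ X)
    (τ : ℕ)
    (hspec : ∀ v ∈ langL X, ∀ w ∈ langL X,
      ∃ u ∈ langL X, u.length = τ ∧ v ++ u ++ w ∈ langL X)
    (hX hY : ℝ)
    (hhX : Tendsto (fun n : ℕ => Real.log (wcount X n) / n) atTop (nhds hX))
    (hhY : Tendsto (fun n : ℕ => Real.log (wcount Y n) / n) atTop (nhds hY)) :
    hY < hX ∧
    ∃ C : ℝ, 1 ≤ C ∧ ∃ n : ℕ, 1 ≤ n ∧ ∃ α₀ : ℝ, 0 < α₀ ∧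
      ∀ α : ℝ, 0 < α → α < α₀ →
        hY + (α / n) * (-Real.log α - Real.log C) ≤ hX := by
  classical
  obtain ⟨w0, hw0X, hw0Y⟩ := exists_excluded_word hYX hYcl hproper
  have hw0ne : w0 ≠ [] := fun h => hw0Y (h ▸ nil_mem_langL hYne)
  set t := w0.length with ht_def
  have ht1 : 1 ≤ t := List.length_pos_iff.mpr hw0ne
  set r := t + 2 * τ with hr_def
  have hr1 : 1 ≤ r := by omega
  have hYXl : langL Y ⊆ langL X := langL_mono hYX
  choose! glue hg1 hg2 hg3 using hspec
  have Hglue : ∀ v ∈ langL X, ∀ w ∈ langL X,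
      (glue v w).length = τ ∧ v ++ glue v w ++ w ∈ langL X :=
    fun v hv w hw => ⟨hg2 v hv w hw, hg3 v hv w hw⟩
  -- choice of q
  set q := max 2 ⌈Real.exp (2 * r * hY + 1)⌉₊ with hq_def
  have hq2 : 2 ≤ q := le_max_left _ _
  have hqlog : 2 * r * hY + 1 ≤ Real.log q := by
    have h0 : ⌈Real.exp (2 * (r:ℝ) * hY + 1)⌉₊ ≤ q := le_max_right _ _
    have h1 : Real.exp (2 * r * hY + 1) ≤ (q : ℝ) :=
      le_trans (Nat.le_ceil _) (Nat.cast_le.mpr h0)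
    calc 2 * r * hY + 1 = Real.log (Real.exp (2 * r * hY + 1)) := (Real.log_exp _).symm
      _ ≤ Real.log q := Real.log_le_log (Real.exp_pos _) h1
  set ℓ := (q - 1) * r with hℓ_def
  have hℓ1 : 1 ≤ ℓ := by
    have : 1 ≤ q - 1 := by omega
    exact Nat.one_le_iff_ne_zero.mpr (Nat.mul_ne_zero (by omega) (by omega))
  have hlogc : hY * ℓ ≤ Real.log (wcount Y ℓ) := log_wcount_lower hYinv hYne hhY ℓ hℓ1
  have hcount : ∀ s : ℕ, (wcount Y ℓ * q) ^ s ≤ wcount X (s * ((q + 1) * r)) :=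
    fun s => count_lower (t := t) (q := q) Hglue hw0X rfl rfl hYXl hYinv hw0Y hXne s
  set D : ℝ := (((q + 1) * r : ℕ) : ℝ) with hD_def
  have hDpos : (0 : ℝ) < D := by
    have h : 1 ≤ (q + 1) * r := Nat.one_le_iff_ne_zero.mpr (by positivity)
    rw [hD_def]
    exact_mod_cast h
  set K : ℝ := (Real.log q + hY * ℓ) / D with hK_def
  have hcpos : (1 : ℝ) ≤ (wcount Y ℓ : ℝ) := by exact_mod_cast wcount_pos hYne ℓ
  have hqpos : (0 : ℝ) < (q : ℝ) := by positivity
  have key : ∀ᶠ s : ℕ in atTop,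
      K ≤ Real.log (wcount X (s * ((q + 1) * r))) / ((s * ((q + 1) * r) : ℕ) : ℝ) := by
    filter_upwards [Filter.eventually_ge_atTop 1] with s hs
    set N := s * ((q + 1) * r) with hN_def
    have hNpos : (0 : ℝ) < ((N : ℕ) : ℝ) := by
      have : 1 ≤ N := Nat.one_le_iff_ne_zero.mpr (by positivity)
      exact_mod_cast this
    have hcast : ((wcount Y ℓ : ℝ) * q) ^ s ≤ ((wcount X N : ℕ) : ℝ) := by
      have := hcount s
      push_cast
      exact_mod_cast this
    have hbasepos : (0 : ℝ) < (wcount Y ℓ : ℝ) * q := by positivity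
    have hlogX : s * (Real.log (wcount Y ℓ) + Real.log q) ≤ Real.log (wcount X N) := by
      calc s * (Real.log (wcount Y ℓ) + Real.log q)
          = Real.log (((wcount Y ℓ : ℝ) * q) ^ s) := by
            rw [Real.log_pow, Real.log_mul (by positivity) (by positivity)]
        _ ≤ Real.log (wcount X N) := Real.log_le_log (by positivity) hcast
    rw [le_div_iff₀ hNpos]
    have hNcast : ((N : ℕ) : ℝ) = (s : ℝ) * D := by
      rw [hN_def, hD_def]; push_cast; ring
    have hKN : K * ((N : ℕ) : ℝ) = s * (Real.log q + hY * ℓ) := by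
      rw [hNcast, hK_def]
      field_simp
    rw [hKN]
    have hs0 : (0 : ℝ) ≤ (s : ℝ) := by positivity
    calc (s : ℝ) * (Real.log q + hY * ℓ)
        ≤ s * (Real.log (wcount Y ℓ) + Real.log q) := by
          apply mul_le_mul_of_nonneg_left _ hs0
          linarith [hlogc]
      _ ≤ Real.log (wcount X N) := hlogX
  have hφ : Tendsto (fun s : ℕ => s * ((q + 1) * r)) atTop atTop := by
    apply Filter.tendsto_atTop_atTop.mpr
    intro b
    refine ⟨b, fun a ha => le_trans ha ?_⟩
    have : 1 ≤ (q + 1) * r := Nat.one_le_iff_ne_zero.mpr (by positivity)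
    exact Nat.le_mul_of_pos_right a (by omega)
  have hsublim : Tendsto (fun s : ℕ =>
      Real.log (wcount X (s * ((q + 1) * r))) / ((s * ((q + 1) * r) : ℕ) : ℝ))
      atTop (nhds hX) := hhX.comp hφ
  have hXK : K ≤ hX := ge_of_tendsto hsublim key
  -- K is at least hY + 1/D
  have hℓcast : (ℓ : ℝ) = (q : ℝ) * r - r := by
    rw [hℓ_def]
    push_cast [Nat.cast_sub (by omega : 1 ≤ q)]
    ring
  have hDcast : D = (q : ℝ) * r + r := by
    rw [hD_def]; push_cast; ring
  have hKlower : hY + 1 / D ≤ K := by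
    rw [hK_def, le_div_iff₀ hDpos]
    have : (hY + 1 / D) * D = hY * D + 1 := by field_simp
    rw [this, hDcast, hℓcast]
    have hrpos : (0:ℝ) < (r:ℝ) := by exact_mod_cast hr1
    nlinarith [hqlog]
  have hlt : hY < hX := by
    have h1D : 0 < 1 / D := by positivity
    linarith
  refine ⟨hlt, 1, le_refl 1, 1, le_refl 1, min 1 (((hX - hY) / 2) ^ 2), ?_, ?_⟩
  · apply lt_min one_pos
    have : 0 < (hX - hY) / 2 := by linarith
    positivity
  · intro α hα hαlt
    have hα1 : α < 1 := lt_of_lt_of_le hαlt (min_le_left _ _)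
    have hsq : Real.sqrt α < (hX - hY) / 2 := by
      have h2 : α < ((hX - hY) / 2) ^ 2 := lt_of_lt_of_le hαlt (min_le_right _ _)
      have hpos2 : 0 < (hX - hY) / 2 := by linarith
      have := Real.sqrt_lt_sqrt (le_of_lt hα) h2
      rwa [Real.sqrt_sq (le_of_lt hpos2)] at this
    have hsqpos : 0 < Real.sqrt α := Real.sqrt_pos.mpr hα
    have hlog : -Real.log α ≤ 2 / Real.sqrt α := by
      have h1 : Real.log (Real.sqrt α) = Real.log α / 2 := Real.log_sqrt (le_of_lt hα)
      have h2 : Real.log (Real.sqrt α)⁻¹ ≤ (Real.sqrt α)⁻¹ - 1 :=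
        Real.log_le_sub_one_of_pos (by positivity)
      rw [Real.log_inv, h1] at h2
      calc -Real.log α = 2 * (-(Real.log α / 2)) := by ring
        _ ≤ 2 * ((Real.sqrt α)⁻¹ - 1) := by linarith
        _ ≤ 2 * (Real.sqrt α)⁻¹ := by linarith
        _ = 2 / Real.sqrt α := by rw [div_eq_mul_inv]
    have hmain : α * (-Real.log α) ≤ 2 * Real.sqrt α := by
      calc α * (-Real.log α) ≤ α * (2 / Real.sqrt α) := by
            apply mul_le_mul_of_nonneg_left hlog (le_of_lt hα)
        _ = 2 * (α / Real.sqrt α) := by ring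
        _ = 2 * Real.sqrt α := by rw [Real.div_sqrt]
    have hfin : α * (-Real.log α) ≤ hX - hY := by
      calc α * (-Real.log α) ≤ 2 * Real.sqrt α := hmain
        _ ≤ 2 * ((hX - hY) / 2) := by linarith
        _ = hX - hY := by ring
    simp only [Nat.cast_one, div_one, Real.log_one, sub_zero]
    linarith
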